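/- Let (Ω, μ) be a finite measure space with normalized expectation E, and let U ≥ 0 be measurable with E[U] = 1 and E[U³] < ∞. Then cov(U², U) := E[U²(U−1)] ≥ var(U)·(1 + var(U)) = var(U)·E[U²] ≥ 0, with equality in the first inequality if and only if U is almost surely constant on {U > 0} (selective equilibrium), i.e., U ∈ {0, 1/p*} a.e. where p* = μ(U>0)/μ(Ω). -/

import Mathlib

open MeasureTheory Real Set

/-- Strong First Law of Natural Selection: the selective acceleration
`cov(U²,U) = E[U²(U−1)]` satisfies `cov(U²,U) ≥ var(U)(1+var(U)) = var(U)·E[U²] ≥ 0`,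
with equality in the first inequality iff `U ∈ {0, 1/p*}` a.e. (selective equilibrium). -/
theorem strong_first_law
    {Ω : Type*} [MeasurableSpace Ω] (μ : Measure Ω) [IsFiniteMeasure μ]
    (hN : 0 < (μ univ).toReal)
    (U : Ω → ℝ) (hUm : Measurable U) (hU0 : ∀ x, 0 ≤ U x)
    (hU1 : (∫ x, U x ∂μ) / (μ univ).toReal = 1)
    (hU2 : Integrable (fun x => (U x) ^ 2) μ)
    (hU3 : Integrable (fun x => (U x) ^ 3) μ) :
    let N := (μ univ).toReal
    let pstar := (μ {x | 0 < U x}).toReal / N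
    let v := (∫ x, (U x) ^ 2 ∂μ) / N - 1
    let c := (∫ x, (U x) ^ 2 * (U x - 1) ∂μ) / N
    c ≥ v * (1 + v) ∧
      v * (1 + v) = v * ((∫ x, (U x) ^ 2 ∂μ) / N) ∧
      v * (1 + v) ≥ 0 ∧
      (c = v * (1 + v) ↔ ∀ᵐ x ∂μ, U x = 0 ∨ U x = 1 / pstar) := by
  intro N pstar v c
  have hNdef : N = (μ univ).toReal := rfl
  have hpsdef : pstar = (μ {x | 0 < U x}).toReal / N := rfl
  have hvdef : v = (∫ x, (U x) ^ 2 ∂μ) / N - 1 := rfl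
  have hcdef : c = (∫ x, (U x) ^ 2 * (U x - 1) ∂μ) / N := rfl
  have hNne : N ≠ 0 := ne_of_gt hN
  set S : Set Ω := {x | 0 < U x} with hSdef
  have hSm : MeasurableSet S := measurableSet_lt measurable_const hUm
  set A := ∫ x, U x ∂μ with hAdef
  set B := ∫ x, (U x) ^ 2 ∂μ with hBdef
  set C := ∫ x, (U x) ^ 3 ∂μ with hCdef
  -- basic integrability of U
  have hUint : Integrable U μ := by
    have hg : Integrable (fun x => (U x) ^ 2 + 1) μ := hU2.add (integrable_const 1)
    refine hg.mono' hUm.aestronglyMeasurable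
      (Filter.Eventually.of_forall fun x => ?_)
    rw [Real.norm_eq_abs, abs_of_nonneg (hU0 x)]
    nlinarith [sq_nonneg (U x - 1), hU0 x]
  -- E[U] = N
  have hA : A = N := (div_eq_one_iff_eq hNne).mp hU1
  -- integral of constants
  have hint1 : ∫ _x, (1 : ℝ) ∂μ = N := by
    rw [integral_const, smul_eq_mul, mul_one, hNdef, measureReal_def]
  -- B ≥ N via ∫ (U-1)² ≥ 0
  have hBN : N ≤ B := by
    have h1 : 0 ≤ ∫ x, (U x - 1) ^ 2 ∂μ := integral_nonneg fun x => sq_nonneg _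
    have h2 : ∫ x, (U x - 1) ^ 2 ∂μ = B - 2 * A + N := by
      have he : (fun x => (U x - 1) ^ 2)
          = fun x => ((U x) ^ 2 - 2 * U x) + 1 := by funext x; ring
      have hi0 : Integrable (fun x => 2 * U x) μ := hUint.const_mul 2
      have hi1 : Integrable (fun x => (U x) ^ 2 - 2 * U x) μ := hU2.sub hi0
      rw [he, integral_add hi1 (integrable_const 1),
        integral_sub hU2 hi0, integral_const_mul, hint1]
    rw [h2, hA] at h1
    linarith
  have hB0 : 0 < B := lt_of_lt_of_le hN hBN
  -- the key quantity k = E[U²]/N and the nonnegative integrand U (U-k)²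
  set k := B / N with hkdef
  have hk1 : 1 ≤ k := (one_le_div hN).mpr hBN
  have hk0 : k ≠ 0 := by positivity
  have hfid : (fun x => U x * (U x - k) ^ 2)
      = fun x => ((U x) ^ 3 - (2 * k) * (U x) ^ 2) + k ^ 2 * U x := by
    funext x; ring
  have hi2 : Integrable (fun x => (2 * k) * (U x) ^ 2) μ := hU2.const_mul _
  have hi3 : Integrable (fun x => (U x) ^ 3 - (2 * k) * (U x) ^ 2) μ := hU3.sub hi2
  have hi4 : Integrable (fun x => k ^ 2 * U x) μ := hUint.const_mul _
  have hintI : Integrable (fun x => U x * (U x - k) ^ 2) μ := by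
    rw [hfid]; exact hi3.add hi4
  have hI : ∫ x, U x * (U x - k) ^ 2 ∂μ = C - 2 * k * B + k ^ 2 * N := by
    rw [hfid, integral_add hi3 hi4,
      integral_sub hU3 hi2, integral_const_mul, integral_const_mul,
      show (∫ x, U x ∂μ) = N from hA]
  have hInn : 0 ≤ ∫ x, U x * (U x - k) ^ 2 ∂μ :=
    integral_nonneg fun x => mul_nonneg (hU0 x) (sq_nonneg _)
  -- c in terms of C and B
  have hcC : ∫ x, (U x) ^ 2 * (U x - 1) ∂μ = C - B := by
    have he : (fun x => (U x) ^ 2 * (U x - 1)) = fun x => (U x) ^ 3 - (U x) ^ 2 := by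
      funext x; ring
    rw [he, integral_sub hU3 hU2]
  -- the fundamental identity: c - v(1+v) = (∫ U (U-k)²)/N
  have hdiff : c - v * (1 + v) = (∫ x, U x * (U x - k) ^ 2 ∂μ) / N := by
    rw [hcdef, hvdef, hcC, hI, hkdef]
    field_simp
    ring
  refine ⟨?_, ?_, ?_, ?_⟩
  · -- c ≥ v (1+v)
    have := div_nonneg hInn hN.le
    rw [← hdiff] at this
    linarith
  · -- v(1+v) = v · E[U²]
    rw [hvdef]; ring
  · -- v(1+v) ≥ 0
    have hv0 : 0 ≤ v := by rw [hvdef]; have := (one_le_div hN).mpr hBN; linarith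
    have hv1 : 0 ≤ 1 + v := by linarith
    exact mul_nonneg hv0 hv1
  · -- equality characterization
    have key : c = v * (1 + v) ↔ ∀ᵐ x ∂μ, U x = 0 ∨ U x = k := by
      rw [← sub_eq_zero, hdiff, div_eq_zero_iff, or_iff_left hNne,
        integral_eq_zero_iff_of_nonneg (fun x => mul_nonneg (hU0 x) (sq_nonneg _)) hintI]
      constructor <;> intro h <;> filter_upwards [h] with x hx
      · rcases mul_eq_zero.mp hx with h1 | h1
        · exact Or.inl h1
        · exact Or.inr (by nlinarith [sq_nonneg (U x - k)])
      · rcases hx with h1 | h1 <;> simp [h1]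
    rw [key]
    constructor
    · -- a.e. U ∈ {0,k}  →  a.e. U ∈ {0, 1/p*}
      intro h
      have hUe : U =ᵐ[μ] S.indicator (fun _ => k) := by
        filter_upwards [h] with x hx
        rcases hx with h0 | hk
        · rw [h0, Set.indicator_of_notMem]
          simp [hSdef, h0]
        · rw [hk, Set.indicator_of_mem]
          show 0 < U x
          rw [hk]; linarith
      have hA2 : N = (μ S).toReal * k := by
        rw [← hA, hAdef, integral_congr_ae hUe, integral_indicator_const _ hSm, smul_eq_mul, measureReal_def]
      have hps : pstar = 1 / k := by
        rw [hpsdef]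
        have hμS : (μ S).toReal = N / k := by
          rw [eq_div_iff hk0, hA2]
        rw [hμS, hkdef]
        have hBne : B ≠ 0 := ne_of_gt hB0
        field_simp
      rw [hps]
      have : 1 / (1 / k) = k := by field_simp
      rw [this]
      exact h
    · -- a.e. U ∈ {0, 1/p*}  →  a.e. U ∈ {0, k}
      intro h
      -- first, μ S ≠ 0
      have hS0 : μ S ≠ 0 := by
        intro h0
        have hU0ae : U =ᵐ[μ] fun _ => 0 := by
          rw [Filter.EventuallyEq, ae_iff]
          refine measure_mono_null (fun x hx => ?_) h0
          exact lt_of_le_of_ne (hU0 x) (Ne.symm hx)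
        have : A = 0 := by rw [hAdef, integral_congr_ae hU0ae, integral_zero]
        rw [hA] at this
        exact hNne this
      have hμSpos : 0 < (μ S).toReal := ENNReal.toReal_pos hS0 (measure_ne_top μ S)
      have hps0 : 0 < pstar := by rw [hpsdef]; exact div_pos hμSpos hN
      have ha0 : 0 < 1 / pstar := by positivity
      have hUe : U =ᵐ[μ] S.indicator (fun _ => 1 / pstar) := by
        filter_upwards [h] with x hx
        rcases hx with h0 | h1
        · rw [h0, Set.indicator_of_notMem]
          simp [hSdef, h0]
        · rw [h1, Set.indicator_of_mem]
          show 0 < U x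
          rw [h1]; exact ha0
      have hA2 : N = (μ S).toReal * (1 / pstar) := by
        rw [← hA, hAdef, integral_congr_ae hUe, integral_indicator_const _ hSm, smul_eq_mul, measureReal_def]
      have hU2e : (fun x => (U x) ^ 2) =ᵐ[μ] S.indicator (fun _ => (1 / pstar) ^ 2) := by
        filter_upwards [hUe] with x hx
        show U x ^ 2 = S.indicator (fun _ => (1 / pstar) ^ 2) x
        rw [hx]
        by_cases hxS : x ∈ S <;> simp [hxS]
      have hB2 : B = (μ S).toReal * (1 / pstar) ^ 2 := by
        rw [hBdef, integral_congr_ae hU2e, integral_indicator_const _ hSm, smul_eq_mul, measureReal_def]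
      have hkeq : k = 1 / pstar := by
        rw [hkdef, hB2, hA2]
        have hμSne : (μ S).toReal ≠ 0 := ne_of_gt hμSpos
        have hane : (1 : ℝ) / pstar ≠ 0 := ne_of_gt ha0
        field_simp
      rw [hkeq]
      exact h
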